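/- There exists a spanning tree edge set S with p_S > 0 such that c(S) + c(J_S) ≤ c(x*) + c(J_p). Consequently, since S ∪̇ J_S is a T-tour for every spanning tree S, there exists a T-tour of G of cost at most c(x*) + c(J_p). -/

import Mathlib

open Finset
open scoped Classical symmDiff

/-- A multigraph on vertex type `V` with edge type `E`, given by the two endpoints
of each edge. -/
structure MultiGraph (V E : Type*) where
  fst : E → V
  snd : E → V

namespace MultiGraph

variable {V E : Type*} [Fintype V] [DecidableEq V] [Fintype E] [DecidableEq E]
variable (G : MultiGraph V E)

/-- The cut `δ(U)`: the set of edges with exactly one endpoint in `U`. -/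
noncomputable def cut (U : Finset V) : Finset E :=
  univ.filter fun e => (G.fst e ∈ U ∧ G.snd e ∉ U) ∨ (G.fst e ∉ U ∧ G.snd e ∈ U)

/-- The degree of `v` with respect to the edge multiset `F`. -/
def deg (F : Multiset E) (v : V) : ℕ :=
  (F.map fun e => (if G.fst e = v then 1 else 0) + (if G.snd e = v then 1 else 0)).sum

/-- `odd(F)`: the set of vertices of odd degree in `(V, F)`. -/
noncomputable def oddVerts (F : Multiset E) : Finset V :=
  univ.filter fun v => Odd (G.deg F v)

/-- Adjacency via an edge satisfying the predicate `P`. -/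
def Adj (P : E → Prop) (a b : V) : Prop :=
  ∃ e, P e ∧ ((G.fst e = a ∧ G.snd e = b) ∨ (G.fst e = b ∧ G.snd e = a))

/-- `(V, {e | P e})` is a connected (spanning) subgraph. -/
def ConnectedOn (P : E → Prop) : Prop :=
  ∀ u w : V, Relation.ReflTransGen (G.Adj P) u w

/-- The graph `G` is connected. -/
def Connected : Prop := G.ConnectedOn fun _ => True

/-- A `T`-tour: a multi-subset `F` of the edges such that `(V, F)` is connected and
`odd(F) = T`. -/
def IsTTour (T : Finset V) (F : Multiset E) : Prop :=
  G.ConnectedOn (· ∈ F) ∧ G.oddVerts F = T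

/-- `S` is the edge set of a spanning tree of `G`. -/
def IsSpanningTree (S : Finset E) : Prop :=
  G.ConnectedOn (· ∈ S) ∧ S.card + 1 = Fintype.card V

/-- `δ(𝒲)`: the set of edges whose endpoints lie in different parts of the
partition `𝒲` of `V`. -/
noncomputable def partitionCut (W : Finpartition (univ : Finset V)) : Finset E :=
  univ.filter fun e => ∀ P ∈ W.parts, ¬(G.fst e ∈ P ∧ G.snd e ∈ P)

/-- Feasibility for the standard LP relaxation of the `T`-tour problem. -/
def LPFeasible (T : Finset V) (x : E → ℝ) : Prop :=
  (∀ e, 0 ≤ x e) ∧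
  (∀ U : Finset V, U.Nonempty → U ≠ univ → Even ((T ∩ U).card) →
    2 ≤ ∑ e ∈ G.cut U, x e) ∧
  (∀ W : Finpartition (univ : Finset V),
    (W.parts.card : ℝ) - 1 ≤ ∑ e ∈ G.partitionCut W, x e)

/-- `C` is a cut of `G`, i.e. `C = δ(U)` for some nonempty proper `U ⊆ V`. -/
def IsCut (C : Finset E) : Prop :=
  ∃ U : Finset V, U.Nonempty ∧ U ≠ univ ∧ C = G.cut U

/-- A narrow cut: a cut `C` with `x(C) < 2`. -/
def Narrow (x : E → ℝ) (C : Finset E) : Prop :=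
  G.IsCut C ∧ ∑ e ∈ C, x e < 2

/-- `𝒩`: the set of narrow cuts. -/
noncomputable def narrowCuts (x : E → ℝ) : Finset (Finset E) :=
  univ.filter fun C => G.Narrow x C

/-- A narrow cut `C` is lonely for `S` if `|S ∩ C| = 1`. -/
def Lonely (x : E → ℝ) (S C : Finset E) : Prop :=
  G.Narrow x C ∧ (S ∩ C).card = 1

/-- `ℒ_S`: the set of lonely cuts of `S`. -/
noncomputable def lonelyCuts (x : E → ℝ) (S : Finset E) : Finset (Finset E) :=
  univ.filter fun C => G.Lonely x S C

/-- `L_S = ∪_{C ∈ ℒ_S} (S ∩ C)`: the set of lonely edges of `S`. -/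
noncomputable def lonelyEdges (x : E → ℝ) (S : Finset E) : Finset E :=
  S.filter fun e => ∃ C, G.Lonely x S C ∧ e ∈ C

/-- The incidence vector `χ^F` of an edge set `F`. -/
def chi (F : Finset E) : E → ℝ := fun e => if e ∈ F then 1 else 0

/-- The vector `v^C = (1/(2 - x(C))) · Σ_{S : C ∈ ℒ_S} p_S · χ^{S ∩ C}`. -/
noncomputable def vC (x : E → ℝ) (p : Finset E → ℝ) (C : Finset E) : E → ℝ :=
  fun e => (1 / (2 - ∑ f ∈ C, x f)) *
    ∑ S : Finset E, (if G.Lonely x S C then p S else 0) * chi (S ∩ C) e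

/-- The modified cost
`c^S(e) = c(e) + 2·(Σ_{C ∈ ℒ_S : e ∈ C} c(S ∩ C) − max_{C ∈ ℒ_S : e ∈ C} c(S ∩ C))`,
where the maximum over the empty set is `0`. -/
noncomputable def modCost (c x : E → ℝ) (S : Finset E) (e : E) : ℝ :=
  c e + 2 * ((∑ C ∈ (G.lonelyCuts x S).filter (fun C => e ∈ C), ∑ f ∈ S ∩ C, c f)
    - (if h : ((G.lonelyCuts x S).filter (fun C => e ∈ C)).Nonempty
        then ((G.lonelyCuts x S).filter (fun C => e ∈ C)).sup' h (fun C => ∑ f ∈ S ∩ C, c f)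
        else 0))

/-- The set of vertices reachable from `v` using edges satisfying `P`. -/
noncomputable def reachSet (P : E → Prop) (v : V) : Finset V :=
  univ.filter fun w => Relation.ReflTransGen (G.Adj P) v w

end MultiGraph

namespace MultiGraph

variable {V E : Type*} [Fintype V] [DecidableEq V] [Fintype E] [DecidableEq E]

lemma sum_mul_chi_aux (c : E → ℝ) (A : Finset E) :
    ∑ e, c e * chi A e = ∑ e ∈ A, c e := by
  simp [chi, mul_ite, mul_one, mul_zero, Finset.sum_ite_mem, Finset.univ_inter]

lemma connectedOn_mono_aux (G : MultiGraph V E) {P Q : E → Prop}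
    (h : ∀ e, P e → Q e) (hc : G.ConnectedOn P) : G.ConnectedOn Q := by
  intro u w
  refine Relation.ReflTransGen.mono (p := G.Adj Q) (fun a b ⟨e, he, h2⟩ => ⟨e, h e he, h2⟩) u w (hc u w)

lemma deg_add_aux (G : MultiGraph V E) (F1 F2 : Multiset E) (v : V) :
    G.deg (F1 + F2) v = G.deg F1 v + G.deg F2 v := by
  simp [deg]

lemma swap_sum_aux (c : E → ℝ) (p : Finset E → ℝ) (q : Finset E → Finset E) :
    ∑ S : Finset E, p S * ∑ e ∈ q S, c e
      = ∑ e, c e * ∑ S : Finset E, p S * chi (q S) e := by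
  calc ∑ S : Finset E, p S * ∑ e ∈ q S, c e
      = ∑ S : Finset E, ∑ e, p S * (c e * chi (q S) e) := by
        simp_rw [← sum_mul_chi_aux c, Finset.mul_sum]
    _ = ∑ e, ∑ S : Finset E, p S * (c e * chi (q S) e) := Finset.sum_comm
    _ = ∑ e, c e * ∑ S : Finset E, p S * chi (q S) e := by
        simp_rw [Finset.mul_sum]
        refine Finset.sum_congr rfl fun e _ => Finset.sum_congr rfl fun S _ => by ring

/-- There is a spanning tree `S` with `p_S > 0` such that
`c(S) + c(J_S) ≤ c(x*) + c(J_p)`; consequently there is a `T`-tour of cost at most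
`c(x*) + c(J_p)`, where `J_S := S \ I_S` and `J_p := Σ_S p_S·χ^{J_S}`. -/
theorem best_of_many_simple_bound (G : MultiGraph V E) (hG : G.Connected)
    (T : Finset V) (hT : Even T.card) (c : E → ℝ) (hc : ∀ e, 0 ≤ c e)
    (x : E → ℝ) (hx : G.LPFeasible T x)
    (p : Finset E → ℝ) (hp0 : ∀ S, 0 ≤ p S)
    (hptree : ∀ S, p S ≠ 0 → G.IsSpanningTree S)
    (hpsum : ∑ S : Finset E, p S = 1)
    (hdom : ∀ e, ∑ S : Finset E, p S * chi S e ≤ x e)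
    (I : Finset E → Finset E)
    (hI : ∀ S, p S ≠ 0 → I S ⊆ S ∧ G.oddVerts (I S).val = T) :
    (∃ S : Finset E, 0 < p S ∧
      (∑ e ∈ S, c e) + (∑ e ∈ S \ I S, c e) ≤
        (∑ e, c e * x e) + ∑ e, c e * ∑ S : Finset E, p S * chi (S \ I S) e) ∧
    (∃ F : Multiset E, G.IsTTour T F ∧
      (F.map c).sum ≤
        (∑ e, c e * x e) + ∑ e, c e * ∑ S : Finset E, p S * chi (S \ I S) e) := by
  classical
  set A : ℝ := (∑ e, c e * x e) + ∑ e, c e * ∑ S : Finset E, p S * chi (S \ I S) e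
    with hA
  set f : Finset E → ℝ := fun S => (∑ e ∈ S, c e) + (∑ e ∈ S \ I S, c e) with hf
  -- average bound
  have havg : ∑ S : Finset E, p S * f S ≤ A := by
    have h1 : ∑ S : Finset E, p S * ∑ e ∈ S, c e ≤ ∑ e, c e * x e := by
      rw [show (∑ S : Finset E, p S * ∑ e ∈ S, c e) = ∑ S : Finset E, p S * ∑ e ∈ id S, c e from rfl, swap_sum_aux c p id]
      exact Finset.sum_le_sum fun e _ =>
        mul_le_mul_of_nonneg_left (hdom e) (hc e)
    have h2 : ∑ S : Finset E, p S * ∑ e ∈ S \ I S, c e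
        = ∑ e, c e * ∑ S : Finset E, p S * chi (S \ I S) e :=
      swap_sum_aux c p (fun S => S \ I S)
    have : ∑ S : Finset E, p S * f S
        = (∑ S : Finset E, p S * ∑ e ∈ S, c e)
          + ∑ S : Finset E, p S * ∑ e ∈ S \ I S, c e := by
      rw [← Finset.sum_add_distrib]
      exact Finset.sum_congr rfl fun S _ => by rw [hf]; ring
    rw [this, h2, hA]
    linarith
  have key : ∃ S : Finset E, 0 < p S ∧ f S ≤ A := by
    by_contra h
    push_neg at h
    obtain ⟨S₀, hS₀⟩ : ∃ S : Finset E, p S ≠ 0 := by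
      by_contra hall
      push_neg at hall
      simp [hall] at hpsum
    have hS₀pos : 0 < p S₀ := lt_of_le_of_ne (hp0 S₀) (Ne.symm hS₀)
    have hlt : ∑ S : Finset E, p S * A < ∑ S : Finset E, p S * f S := by
      refine Finset.sum_lt_sum (fun S _ => ?_) ⟨S₀, Finset.mem_univ _, ?_⟩
      · rcases eq_or_lt_of_le (hp0 S) with hp | hp
        · simp [← hp]
        · exact mul_le_mul_of_nonneg_left (h S hp).le hp.le
      · exact mul_lt_mul_of_pos_left (h S₀ hS₀pos) hS₀pos
    rw [← Finset.sum_mul, hpsum, one_mul] at hlt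
    linarith
  obtain ⟨S, hpS, hle⟩ := key
  refine ⟨⟨S, hpS, hle⟩, ?_⟩
  -- build the T-tour
  have hIS := hI S hpS.ne'
  have htree := hptree S hpS.ne'
  refine ⟨S.val + (S \ I S).val, ⟨?_, ?_⟩, ?_⟩
  · refine connectedOn_mono_aux G (fun e he => ?_) htree.1
    exact Multiset.mem_add.mpr (Or.inl he)
  · have hval : S.val = (I S).val + (S \ I S).val := by
      rw [Finset.sdiff_val]
      exact (add_tsub_cancel_of_le (Finset.val_le_iff.mpr hIS.1)).symm
    have hdeg : ∀ v, G.deg (S.val + (S \ I S).val) v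
        = G.deg (I S).val v + 2 * G.deg (S \ I S).val v := by
      intro v
      rw [deg_add_aux, hval, deg_add_aux]
      ring
    rw [← hIS.2]
    ext v
    simp only [oddVerts, Finset.mem_filter, Finset.mem_univ, true_and, hdeg]
    constructor
    · intro hodd
      rcases Nat.even_or_odd (G.deg (I S).val v) with he | ho
      · exact absurd hodd (by simp [Nat.even_add, he, Nat.not_odd_iff_even])
      · exact ho
    · intro hodd
      rw [Nat.odd_add]
      simp [hodd]
  · have : ((S.val + (S \ I S).val).map c).sum
        = (∑ e ∈ S, c e) + (∑ e ∈ S \ I S, c e) := by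
      rw [Multiset.map_add, Multiset.sum_add]; rfl
    rw [this]
    exact hle

end MultiGraph
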